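/- For a < b, 1/2 < α ≤ 1, and s ∈ (a,b), the diagonal identity G(s,s) = (K(a,a)K(s,s) - K(a,s)²)/K(a,a) holds, and K(a,a)K(s,s) - K(a,s)² ≥ 0. -/

import Mathlib

open Real MeasureTheory Set

/-- Kernel `K(x,t) = (1/Γ(α)²) ∫_{max{x,t}}^{b} (s-x)^{α-1}(s-t)^{α-1} ds`. -/
noncomputable def K (b α x t : ℝ) : ℝ :=
  (1 / Real.Gamma α ^ 2) * ∫ s in max x t..b, (s - x) ^ (α - 1) * (s - t) ^ (α - 1)

/-- Green's function `G(x,t) = K(x,t) - K(a,t)K(x,a)/K(a,a)`. -/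
noncomputable def G (a b α x t : ℝ) : ℝ :=
  K b α x t - K b α a t * K b α x a / K b α a a

/-- Cauchy–Schwarz for integrals of nonnegative functions. -/
lemma cs_aux {μ : Measure ℝ} {f g : ℝ → ℝ}
    (hmf : AEStronglyMeasurable f μ) (hmg : AEStronglyMeasurable g μ)
    (hf0 : 0 ≤ᵐ[μ] f) (hg0 : 0 ≤ᵐ[μ] g)
    (hf2 : Integrable (fun x => f x * f x) μ)
    (hg2 : Integrable (fun x => g x * g x) μ) :
    (∫ x, f x * g x ∂μ) ^ 2 ≤ (∫ x, f x * f x ∂μ) * (∫ x, g x * g x ∂μ) := by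
  have hpq : Real.HolderConjugate 2 2 := Real.holderConjugate_iff.mpr ⟨one_lt_two, by norm_num⟩
  have h2 : ENNReal.ofReal (2 : ℝ) = 2 := by norm_num
  have hmemf : MemLp f (ENNReal.ofReal (2 : ℝ)) μ := by
    rw [h2]
    exact (memLp_two_iff_integrable_sq hmf).2 (by simpa [pow_two] using hf2)
  have hmemg : MemLp g (ENNReal.ofReal (2 : ℝ)) μ := by
    rw [h2]
    exact (memLp_two_iff_integrable_sq hmg).2 (by simpa [pow_two] using hg2)
  have h := MeasureTheory.integral_mul_le_Lp_mul_Lq_of_nonneg hpq hf0 hg0 hmemf hmemg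
  have hrw : ∀ h : ℝ → ℝ, (∫ x, h x ^ (2 : ℝ) ∂μ) = ∫ x, h x * h x ∂μ := by
    intro h
    congr 1
    ext x
    rw [show (2 : ℝ) = ((2 : ℕ) : ℝ) by norm_num, Real.rpow_natCast]
    ring
  rw [hrw f, hrw g] at h
  set A := ∫ x, f x * f x ∂μ with hA_def
  set B := ∫ x, g x * g x ∂μ with hB_def
  have hA : 0 ≤ A := integral_nonneg_of_ae (by filter_upwards [hf0] with x hx; exact mul_nonneg hx hx)
  have hB : 0 ≤ B := integral_nonneg_of_ae (by filter_upwards [hg0] with x hx; exact mul_nonneg hx hx)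
  have h0 : 0 ≤ ∫ x, f x * g x ∂μ :=
    integral_nonneg_of_ae (by filter_upwards [hf0, hg0] with x h1 h2; exact mul_nonneg h1 h2)
  have hsq : (A ^ ((1:ℝ)/2) * B ^ ((1:ℝ)/2)) ^ 2 = A * B := by
    rw [mul_pow, ← Real.rpow_natCast (A ^ ((1:ℝ)/2)) 2, ← Real.rpow_natCast (B ^ ((1:ℝ)/2)) 2,
      ← Real.rpow_mul hA, ← Real.rpow_mul hB]
    norm_num
  calc (∫ x, f x * g x ∂μ) ^ 2 ≤ (A ^ ((1:ℝ)/2) * B ^ ((1:ℝ)/2)) ^ 2 := by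
        apply pow_le_pow_left₀ h0 h
    _ = A * B := hsq

/-- diagonal identity for G and the Cauchy–Schwarz-type nonnegativity. -/
theorem G_diag_identity (a b α : ℝ) (hab : a < b) (hα₁ : 1 / 2 < α) (hα₂ : α ≤ 1)
    (s : ℝ) (hs : s ∈ Set.Ioo a b) :
    G a b α s s = (K b α a a * K b α s s - K b α a s ^ 2) / K b α a a ∧
      0 ≤ K b α a a * K b α s s - K b α a s ^ 2 := by
  obtain ⟨has, hsb⟩ := hs
  have hα0 : (0 : ℝ) < α := by linarith
  have hr : (-1 : ℝ) < 2 * α - 2 := by linarith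
  have hΓ : 0 < Real.Gamma α := Real.Gamma_pos_of_pos hα0
  set c : ℝ := 1 / Real.Gamma α ^ 2 with hc_def
  have hc : 0 < c := by positivity
  set f : ℝ → ℝ := fun u => (u - a) ^ (α - 1) with hf_def
  set g : ℝ → ℝ := fun u => (u - s) ^ (α - 1) with hg_def
  -- integrability of shifted rpow
  have hint : ∀ d : ℝ, IntervalIntegrable (fun u => (u - d) ^ (2 * α - 2)) volume d b := by
    intro d
    have h := (intervalIntegral.intervalIntegrable_rpow' (a := (0 : ℝ)) (b := b - d) hr).comp_sub_right d
    simpa using h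
  -- a.e. equality of products with single rpow
  have hsqeq : ∀ d : ℝ,
      (fun u => (u - d) ^ (α - 1) * (u - d) ^ (α - 1))
        =ᵐ[volume.restrict (Ioc d b)] (fun u => (u - d) ^ (2 * α - 2)) := by
    intro d
    filter_upwards [ae_restrict_mem measurableSet_Ioc] with u hu
    have h0 : 0 < u - d := sub_pos.2 hu.1
    rw [← Real.rpow_add h0]
    congr 1
    ring
  have hff : IntegrableOn (fun u => f u * f u) (Ioc a b) := by
    have := (intervalIntegrable_iff_integrableOn_Ioc_of_le hab.le).1 (hint a)
    exact this.congr ((hsqeq a).symm)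
  have hffs : IntegrableOn (fun u => f u * f u) (Ioc s b) :=
    hff.mono_set (Ioc_subset_Ioc_left has.le)
  have hgg : IntegrableOn (fun u => g u * g u) (Ioc s b) := by
    have := (intervalIntegrable_iff_integrableOn_Ioc_of_le hsb.le).1 (hint s)
    exact this.congr ((hsqeq s).symm)
  have hmf : AEStronglyMeasurable f (volume.restrict (Ioc s b)) := by
    apply ContinuousOn.aestronglyMeasurable _ measurableSet_Ioc
    exact (continuousOn_id.sub continuousOn_const).rpow_const
      fun u hu => Or.inl (by intro h; simp only [Pi.sub_apply, id_eq] at h; nlinarith [hu.1])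
  have hmg : AEStronglyMeasurable g (volume.restrict (Ioc s b)) := by
    apply ContinuousOn.aestronglyMeasurable _ measurableSet_Ioc
    exact (continuousOn_id.sub continuousOn_const).rpow_const
      fun u hu => Or.inl (by intro h; simp only [Pi.sub_apply, id_eq] at h; nlinarith [hu.1])
  -- nonnegativity a.e. on the relevant sets
  have hf0 : 0 ≤ᵐ[volume.restrict (Ioc s b)] f := by
    filter_upwards [ae_restrict_mem measurableSet_Ioc] with u hu
    exact Real.rpow_nonneg (by linarith [hu.1] : (0:ℝ) ≤ u - a) _
  have hf0' : 0 ≤ᵐ[volume.restrict (Ioc a b)] f := by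
    filter_upwards [ae_restrict_mem measurableSet_Ioc] with u hu
    exact Real.rpow_nonneg (by linarith [hu.1] : (0:ℝ) ≤ u - a) _
  have hg0 : 0 ≤ᵐ[volume.restrict (Ioc s b)] g := by
    filter_upwards [ae_restrict_mem measurableSet_Ioc] with u hu
    exact Real.rpow_nonneg (by linarith [hu.1] : (0:ℝ) ≤ u - s) _
  -- the three kernel values as set integrals
  have hKaa : K b α a a = c * ∫ u in Ioc a b, f u * f u := by
    rw [K, max_self, intervalIntegral.integral_of_le hab.le]
  have hKss : K b α s s = c * ∫ u in Ioc s b, g u * g u := by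
    rw [K, max_self, intervalIntegral.integral_of_le hsb.le]
  have hKas : K b α a s = c * ∫ u in Ioc s b, f u * g u := by
    rw [K, max_eq_right has.le, intervalIntegral.integral_of_le hsb.le]
  -- positivity of K a a
  have hAn : 0 ≤ ∫ u in Ioc s b, f u * f u :=
    integral_nonneg_of_ae (by filter_upwards [hf0] with u hu; exact mul_nonneg hu hu)
  have hKaa_pos : 0 < K b α a a := by
    rw [hKaa, ← intervalIntegral.integral_of_le hab.le]
    apply mul_pos hc
    apply intervalIntegral.intervalIntegral_pos_of_pos_on
    · exact (intervalIntegrable_iff_integrableOn_Ioc_of_le hab.le).2 hff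
    · intro x hx
      have h0 : 0 < x - a := sub_pos.2 hx.1
      exact mul_pos (Real.rpow_pos_of_pos h0 _) (Real.rpow_pos_of_pos h0 _)
    · exact hab
  -- symmetry
  have hsym : K b α s a = K b α a s := by
    rw [K, K, max_comm]
    congr 1
    exact intervalIntegral.integral_congr fun u _ => mul_comm _ _
  -- Cauchy-Schwarz
  have hCS : (∫ u in Ioc s b, f u * g u) ^ 2 ≤
      (∫ u in Ioc s b, f u * f u) * ∫ u in Ioc s b, g u * g u :=
    cs_aux hmf hmg hf0 hg0 hffs hgg
  have hmono : (∫ u in Ioc s b, f u * f u) ≤ ∫ u in Ioc a b, f u * f u := by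
    apply setIntegral_mono_set hff
    · filter_upwards [ae_restrict_mem measurableSet_Ioc] with u hu
      have : (0:ℝ) ≤ u - a := by linarith [hu.1]
      exact mul_nonneg (Real.rpow_nonneg this _) (Real.rpow_nonneg this _)
    · exact HasSubset.Subset.eventuallyLE (Ioc_subset_Ioc_left has.le)
  have hBn : 0 ≤ ∫ u in Ioc s b, g u * g u :=
    integral_nonneg_of_ae (by filter_upwards [hg0] with u hu; exact mul_nonneg hu hu)
  have hkey : 0 ≤ K b α a a * K b α s s - K b α a s ^ 2 := by
    rw [hKaa, hKss, hKas]
    set A := ∫ u in Ioc a b, f u * f u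
    set As := ∫ u in Ioc s b, f u * f u
    set B := ∫ u in Ioc s b, g u * g u
    set C := ∫ u in Ioc s b, f u * g u
    have h1 : C ^ 2 ≤ A * B := hCS.trans (mul_le_mul_of_nonneg_right hmono hBn)
    calc (0:ℝ) ≤ c ^ 2 * (A * B - C ^ 2) := mul_nonneg (by positivity) (by linarith)
      _ = c * A * (c * B) - (c * C) ^ 2 := by ring
  refine ⟨?_, hkey⟩
  rw [G, hsym]
  field_simp
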